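/- Let n be an integer and let a, b : ℤ → ℂ be two-sided sequences such that a_j = 0 for all j > 0, b_j = 0 for all j < 0, ‖a‖_{n-2} < ∞, and ‖b‖_{n+2} < ∞. Then the product coefficients c_l := Σ_{j∈ℤ} a_j b_{l-j} are well defined and satisfy both ‖[c]₊‖_{n-1} ≤ 20 · ‖a‖_{n-2} · ‖b‖_{n+2} and ‖[c]₋‖_{n+1} ≤ 20 · ‖a‖_{n-2} · ‖b‖_{n+2}. -/

import Mathlib

open scoped ENNReal

/-- The weighted ℓ²-norm `‖a‖ₙ = (Σ_{j∈ℤ} |a_j|² e^{2nj} / |Γ(j+1/2)|²)^{1/2} ∈ [0,∞]`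
of a two-sided sequence `a : ℤ → ℂ`. -/
noncomputable def wnorm (n : ℤ) (a : ℤ → ℂ) : ℝ≥0∞ :=
  (∑' j : ℤ, ENNReal.ofReal
      (‖a j‖ ^ 2 * Real.exp (2 * n * j) / ‖Complex.Gamma ((j : ℂ) + 1 / 2)‖ ^ 2)) ^ (1 / 2 : ℝ)

/-- The nonnegative truncation `[c]₊` of a two-sided sequence. -/
noncomputable def posTrunc (c : ℤ → ℂ) : ℤ → ℂ := fun l => if 0 ≤ l then c l else 0

/-- The strictly negative truncation `[c]₋` of a two-sided sequence. -/
noncomputable def negTrunc (c : ℤ → ℂ) : ℤ → ℂ := fun l => if l < 0 then c l else 0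


open MeasureTheory

noncomputable def gg (j : ℤ) : ℝ := |Real.Gamma ((j : ℝ) + 1/2)|
noncomputable def ww (n j : ℤ) : ℝ := Real.exp (2 * n * j) / gg j ^ 2
noncomputable def ew (n j : ℤ) : ℝ≥0∞ := ENNReal.ofReal (ww n j)


lemma gg_pos (j : ℤ) : 0 < gg j := by
  rw [gg, abs_pos]
  apply Real.Gamma_ne_zero
  intro m hm
  have : (2 * j + 1 : ℝ) = -(2 * m) := by push_cast at hm ⊢; linarith
  have h2 : (2 * j + 1 : ℤ) = -(2 * m) := by exact_mod_cast this
  omega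

lemma gg_eq (j : ℤ) : ‖Complex.Gamma ((j : ℂ) + 1/2)‖ = gg j := by
  have : ((j : ℂ) + 1/2) = (((j : ℝ) + 1/2 : ℝ) : ℂ) := by push_cast; ring
  rw [this, Complex.Gamma_ofReal, Complex.norm_real]
  rfl

lemma gg_zero : gg 0 = Real.sqrt Real.pi := by
  rw [gg]
  norm_num [Real.Gamma_one_half_eq, Real.sqrt_nonneg, abs_of_nonneg]

lemma gg_rec (j : ℤ) : gg (j + 1) = |(j : ℝ) + 1/2| * gg j := by
  have h : ((j : ℝ) + 1/2) ≠ 0 := by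
    intro h
    have : (2 * j + 1 : ℝ) = 0 := by linarith
    have h2 : (2 * j + 1 : ℤ) = 0 := by exact_mod_cast this
    omega
  have := Real.Gamma_add_one h
  rw [gg, gg, show ((j + 1 : ℤ) : ℝ) + 1/2 = ((j : ℝ) + 1/2) + 1 by push_cast; ring, this,
    abs_mul]

-- Cauchy-Schwarz in ENNReal
lemma cs_tsum (X Y : ℤ → ℝ≥0∞) :
    ∑' j, X j * Y j ≤ (∑' j, X j ^ 2) ^ (1/2 : ℝ) * (∑' j, Y j ^ 2) ^ (1/2 : ℝ) := by
  have h := ENNReal.lintegral_mul_le_Lp_mul_Lq (Measure.count : Measure ℤ)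
    (Real.HolderConjugate.conjExponent (by norm_num : (1:ℝ) < 2))
    (measurable_of_countable X).aemeasurable (measurable_of_countable Y).aemeasurable
  simp only [Pi.mul_apply, lintegral_count] at h
  have h2 : Real.conjExponent 2 = 2 := by
    rw [Real.conjExponent]; norm_num
  rw [h2] at h
  have e : ∀ (Z : ℤ → ℝ≥0∞), (∑' j, Z j ^ (2:ℝ)) = ∑' j, Z j ^ (2:ℕ) := by
    intro Z
    refine tsum_congr fun j => ?_
    rw [show (2:ℝ) = ((2:ℕ):ℝ) by norm_num, ENNReal.rpow_natCast]
  rw [e X, e Y] at h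
  exact h

lemma gg_nat_succ (k : ℕ) : gg ((k:ℤ) + 1) = ((k:ℝ) + 1/2) * gg k := by
  rw [gg_rec, abs_of_pos (by positivity)]
  norm_cast

lemma gg_neg_succ (m : ℕ) : gg (-(m:ℤ)) = ((m:ℝ) + 1/2) * gg (-(m:ℤ) - 1) := by
  have := gg_rec (-(m:ℤ) - 1)
  rw [show -(m:ℤ) - 1 + 1 = -(m:ℤ) by ring] at this
  rw [this, show ((-(m:ℤ) - 1 : ℤ) : ℝ) + 1/2 = -((m:ℝ) + 1/2) by push_cast; ring, abs_neg,
    abs_of_pos (by positivity)]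

lemma pow_le_fact_mul_exp (x : ℝ) (hx : 0 ≤ x) (m : ℕ) : x ^ m ≤ (Nat.factorial m : ℝ) * Real.exp x := by
  have h1 : x ^ m / (Nat.factorial m : ℝ) ≤ Real.exp x := by
    calc x ^ m / (Nat.factorial m : ℝ) ≤ ∑ i ∈ Finset.range (m+1), x ^ i / (Nat.factorial i : ℝ) := by
          refine Finset.single_le_sum (f := fun i => x ^ i / (Nat.factorial i : ℝ)) ?_ ?_
          · intro i _; positivity
          · simp
      _ ≤ Real.exp x := Real.sum_le_exp_of_nonneg hx (m+1)
  have hm : (0:ℝ) < (Nat.factorial m : ℝ) := by positivity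
  rw [div_le_iff₀ hm] at h1
  linarith

lemma L1 (m k : ℕ) (hmk : m ≤ k) :
    gg (-(m:ℤ)) * gg k * (Nat.factorial m : ℝ) ≤ Real.sqrt Real.pi * (2*(k:ℝ)) ^ m * gg ((k:ℤ) - m) := by
  induction m with
  | zero => simp [gg_zero]
  | succ m ih =>
      have hm : m ≤ k := Nat.le_of_succ_le hmk
      have ih := ih hm
      have hrec : gg (-(m:ℤ)) = ((m:ℝ) + 1/2) * gg (-((m:ℕ)+1:ℕ):ℤ) := by
        rw [gg_neg_succ m]; congr 1; push_cast; ring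
      have hrec2 : gg ((k:ℤ) - m) = ((k:ℝ) - (m+1) + 1/2) * gg ((k:ℤ) - ((m:ℕ)+1:ℕ)) := by
        have := gg_rec ((k:ℤ) - (m+1))
        rw [show (k:ℤ) - (m+1) + 1 = (k:ℤ) - m by ring] at this
        rw [this, abs_of_pos]
        · congr 2; push_cast; ring
        · have : (m:ℝ) + 1 ≤ (k:ℝ) := by exact_mod_cast hmk
          push_cast; linarith
      rw [hrec, hrec2] at ih
      have hpos1 : (0:ℝ) < (m:ℝ) + 1/2 := by positivity
      -- multiply target by (m + 1/2)
      rw [← mul_le_mul_iff_of_pos_left hpos1]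
      have hkm : (m:ℝ) + 1 ≤ (k:ℝ) := by exact_mod_cast hmk
      have key : ((m:ℝ) + 1) * ((k:ℝ) - (m+1) + 1/2) ≤ ((m:ℝ) + 1/2) * (2*(k:ℝ)) := by nlinarith
      have hgpos := gg_pos ((k:ℤ) - ((m:ℕ)+1:ℕ))
      have hgpos2 := gg_pos (-((m:ℕ)+1:ℕ):ℤ)
      have hgk := gg_pos (k:ℤ)
      have hfac : (Nat.factorial (m+1) : ℝ) = ((m:ℝ)+1) * (Nat.factorial m : ℝ) := by
        rw [Nat.factorial_succ]; push_cast; ring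
      have sq : (0:ℝ) ≤ Real.sqrt Real.pi * (2*(k:ℝ))^m := by positivity
      calc ((m:ℝ) + 1/2) * (gg (-((m:ℕ)+1:ℕ):ℤ) * gg k * (Nat.factorial (m+1) : ℝ))
          = ((m:ℝ)+1) * (((m:ℝ) + 1/2) * gg (-((m:ℕ)+1:ℕ):ℤ) * gg k * (Nat.factorial m : ℝ)) := by
            rw [hfac]; ring
        _ ≤ ((m:ℝ)+1) * (Real.sqrt Real.pi * (2*(k:ℝ))^m *
              (((k:ℝ) - (m+1) + 1/2) * gg ((k:ℤ) - ((m:ℕ)+1:ℕ)))) := by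
            apply mul_le_mul_of_nonneg_left _ (by positivity)
            convert ih using 1
        _ ≤ ((m:ℝ) + 1/2) * (Real.sqrt Real.pi * (2*(k:ℝ))^(m+1) * gg ((k:ℤ) - ((m:ℕ)+1:ℕ))) := by
            have expand : ((m:ℝ)+1) * (Real.sqrt Real.pi * (2*(k:ℝ))^m *
                (((k:ℝ) - (m+1) + 1/2) * gg ((k:ℤ) - ((m:ℕ)+1:ℕ))))
                = (Real.sqrt Real.pi * (2*(k:ℝ))^m * gg ((k:ℤ) - ((m:ℕ)+1:ℕ))) *
                  (((m:ℝ)+1) * ((k:ℝ) - (m+1) + 1/2)) := by ring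
            have expand2 : ((m:ℝ) + 1/2) * (Real.sqrt Real.pi * (2*(k:ℝ))^(m+1) * gg ((k:ℤ) - ((m:ℕ)+1:ℕ)))
                = (Real.sqrt Real.pi * (2*(k:ℝ))^m * gg ((k:ℤ) - ((m:ℕ)+1:ℕ))) *
                  (((m:ℝ) + 1/2) * (2*(k:ℝ))) := by ring
            rw [expand, expand2]
            exact mul_le_mul_of_nonneg_left key (by positivity)

lemma L2 (p k : ℕ) : gg (-(p:ℤ) - k) * gg k ≤ Real.sqrt Real.pi * gg (-(p:ℤ)) := by
  induction k with
  | zero =>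
      simp only [Nat.cast_zero, sub_zero, gg_zero]
      rw [mul_comm]
  | succ k ih =>
      have h1 : gg (-(p:ℤ) - k) = ((p:ℝ) + k + 1/2) * gg (-(p:ℤ) - (k+1:ℕ)) := by
        have := gg_neg_succ (p + k)
        rw [show (-( (p+k:ℕ) :ℤ)) = -(p:ℤ) - k by push_cast; ring] at this
        rw [this]
        congr 1
        · push_cast; ring
        · congr 1; push_cast; ring
      have h2 : gg ((k:ℕ)+1:ℤ) = ((k:ℝ) + 1/2) * gg k := by
        have := gg_nat_succ k
        rw [← this]
      have hppos : (0:ℝ) < (p:ℝ) + k + 1/2 := by positivity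
      rw [← mul_le_mul_iff_of_pos_left hppos]
      have hg1 := gg_pos (-(p:ℤ) - (k+1:ℕ))
      have hg2 := gg_pos (k:ℤ)
      have hg3 := gg_pos (-(p:ℤ))
      calc ((p:ℝ) + k + 1/2) * (gg (-(p:ℤ) - (k+1:ℕ)) * gg ((k+1:ℕ):ℤ))
          = gg (-(p:ℤ) - k) * (((k:ℝ) + 1/2) * gg k) := by
            rw [h1, show (((k+1:ℕ)):ℤ) = ((k:ℕ):ℤ)+1 by push_cast; ring, h2]; ring
        _ ≤ gg (-(p:ℤ) - k) * (((p:ℝ) + k + 1/2) * gg k) := by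
            apply mul_le_mul_of_nonneg_left _ (le_of_lt (gg_pos _))
            apply mul_le_mul_of_nonneg_right _ (le_of_lt hg2)
            linarith
        _ = ((p:ℝ) + k + 1/2) * (gg (-(p:ℤ) - k) * gg k) := by ring
        _ ≤ ((p:ℝ) + k + 1/2) * (Real.sqrt Real.pi * gg (-(p:ℤ))) := by
            exact mul_le_mul_of_nonneg_left ih (le_of_lt hppos)

lemma ww_pos (n j : ℤ) : 0 < ww n j := div_pos (Real.exp_pos _) (pow_pos (gg_pos j) 2)

lemma ew_ne_zero (n j : ℤ) : ew n j ≠ 0 := by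
  simp [ew, ENNReal.ofReal_pos.mpr (ww_pos n j), ne_of_gt]
lemma ew_ne_top (n j : ℤ) : ew n j ≠ ⊤ := ENNReal.ofReal_ne_top

lemma ew_ratio (A B T j k : ℤ) (r : ℝ)
    (hr : 2*(T:ℝ)*((j:ℝ)+(k:ℝ)) = r + 2*(A:ℝ)*(j:ℝ) + 2*(B:ℝ)*(k:ℝ)) :
    ew T (j+k) / (ew A j * ew B k)
      = ENNReal.ofReal (Real.exp r * (gg j * gg k / gg (j+k))^2) := by
  rw [ew, ew, ew, ← ENNReal.ofReal_mul (ww_pos A j).le,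
    ← ENNReal.ofReal_div_of_pos (mul_pos (ww_pos A j) (ww_pos B k))]
  congr 1
  rw [ww, ww, ww]
  have hgj := gg_pos j
  have hgk := gg_pos k
  have hgl := gg_pos (j+k)
  have hexp : Real.exp (2 * (T:ℝ) * ((j+k : ℤ):ℝ))
      = Real.exp r * Real.exp (2*(A:ℝ)*(j:ℝ)) * Real.exp (2*(B:ℝ)*(k:ℝ)) := by
    rw [← Real.exp_add, ← Real.exp_add]
    congr 1
    push_cast
    linarith [hr]
  rw [hexp]
  have e1 := Real.exp_ne_zero (2*(A:ℝ)*(j:ℝ))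
  have e2 := Real.exp_ne_zero (2*(B:ℝ)*(k:ℝ))
  field_simp

-- per-term estimate, positive-truncation case
lemma E1 (m k : ℕ) (hmk : m ≤ k) :
    Real.exp (-2*(m:ℝ) - 6*(k:ℝ)) * (gg (-(m:ℤ)) * gg (k:ℤ) / gg ((k:ℤ) - m))^2
      ≤ Real.pi * Real.exp (-4*(k:ℝ)) := by
  have hgkm := gg_pos ((k:ℤ) - m)
  have hR : gg (-(m:ℤ)) * gg (k:ℤ) / gg ((k:ℤ) - m) ≤ Real.sqrt Real.pi * Real.exp ((k:ℝ) + m) := by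
    rw [div_le_iff₀ hgkm]
    have h2 : (2*(k:ℝ))^m ≤ (Nat.factorial m : ℝ) * Real.exp ((k:ℝ) + m) := by
      have he : (0:ℝ) < Real.exp 1 := Real.exp_pos 1
      have hx : (0:ℝ) ≤ 2*(k:ℝ)/Real.exp 1 := by positivity
      have h3 := pow_le_fact_mul_exp _ hx m
      have h4 : (2*(k:ℝ))^m = (2*(k:ℝ)/Real.exp 1)^m * (Real.exp 1)^m := by
        rw [div_pow, div_mul_cancel₀]
        positivity
      have h5 : Real.exp (2*(k:ℝ)/Real.exp 1) ≤ Real.exp (k:ℝ) := by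
        apply Real.exp_le_exp.mpr
        have h2e : (2:ℝ) ≤ Real.exp 1 := by
          have := Real.add_one_le_exp 1
          linarith
        rw [div_le_iff₀ he]
        nlinarith [Nat.cast_nonneg (α := ℝ) k]
      have h6 : (Real.exp 1)^m = Real.exp (m:ℝ) := by
        rw [← Real.exp_nat_mul]
        norm_num
      calc (2*(k:ℝ))^m = (2*(k:ℝ)/Real.exp 1)^m * (Real.exp 1)^m := h4
        _ ≤ ((Nat.factorial m : ℝ) * Real.exp (2*(k:ℝ)/Real.exp 1)) * (Real.exp 1)^m := by
            apply mul_le_mul_of_nonneg_right h3 (by positivity)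
        _ ≤ ((Nat.factorial m : ℝ) * Real.exp (k:ℝ)) * Real.exp (m:ℝ) := by
            rw [h6]
            apply mul_le_mul_of_nonneg_right _ (Real.exp_pos _).le
            exact mul_le_mul_of_nonneg_left h5 (by positivity)
        _ = (Nat.factorial m : ℝ) * Real.exp ((k:ℝ) + m) := by
            rw [Real.exp_add]; ring
    have hfacpos : (0:ℝ) < (Nat.factorial m : ℝ) := by positivity
    have hL1 := L1 m k hmk
    -- gg(-m) gg k * m! ≤ √π (2k)^m gg(k-m) ≤ √π (m! e^{k+m}) gg(k-m)
    have : gg (-(m:ℤ)) * gg (k:ℤ) * (Nat.factorial m : ℝ)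
        ≤ Real.sqrt Real.pi * ((Nat.factorial m : ℝ) * Real.exp ((k:ℝ) + m)) * gg ((k:ℤ) - m) := by
      calc gg (-(m:ℤ)) * gg (k:ℤ) * (Nat.factorial m : ℝ)
          ≤ Real.sqrt Real.pi * (2*(k:ℝ))^m * gg ((k:ℤ) - m) := hL1
        _ ≤ Real.sqrt Real.pi * ((Nat.factorial m : ℝ) * Real.exp ((k:ℝ) + m)) * gg ((k:ℤ) - m) := by
            apply mul_le_mul_of_nonneg_right _ hgkm.le
            exact mul_le_mul_of_nonneg_left h2 (Real.sqrt_nonneg _)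
    nlinarith [this]
  have hRnn : 0 ≤ gg (-(m:ℤ)) * gg (k:ℤ) / gg ((k:ℤ) - m) :=
    div_nonneg (mul_nonneg (gg_pos _).le (gg_pos _).le) (gg_pos _).le
  have hsq : (gg (-(m:ℤ)) * gg (k:ℤ) / gg ((k:ℤ) - m))^2
      ≤ Real.pi * Real.exp (2*((k:ℝ) + m)) := by
    have := mul_le_mul hR hR hRnn (by positivity)
    calc (gg (-(m:ℤ)) * gg (k:ℤ) / gg ((k:ℤ) - m))^2
        = (gg (-(m:ℤ)) * gg (k:ℤ) / gg ((k:ℤ) - m)) * (gg (-(m:ℤ)) * gg (k:ℤ) / gg ((k:ℤ) - m)) := sq _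
      _ ≤ (Real.sqrt Real.pi * Real.exp ((k:ℝ) + m)) * (Real.sqrt Real.pi * Real.exp ((k:ℝ) + m)) := this
      _ = Real.pi * Real.exp (2*((k:ℝ) + m)) := by
          rw [show (Real.sqrt Real.pi * Real.exp ((k:ℝ) + m)) * (Real.sqrt Real.pi * Real.exp ((k:ℝ) + m))
            = (Real.sqrt Real.pi * Real.sqrt Real.pi) * (Real.exp ((k:ℝ) + m) * Real.exp ((k:ℝ) + m)) by ring,
            Real.mul_self_sqrt Real.pi_nonneg, ← Real.exp_add]
          ring_nf
  calc Real.exp (-2*(m:ℝ) - 6*(k:ℝ)) * (gg (-(m:ℤ)) * gg (k:ℤ) / gg ((k:ℤ) - m))^2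
      ≤ Real.exp (-2*(m:ℝ) - 6*(k:ℝ)) * (Real.pi * Real.exp (2*((k:ℝ) + m))) := by
        exact mul_le_mul_of_nonneg_left hsq (Real.exp_pos _).le
    _ = Real.pi * Real.exp (-4*(k:ℝ)) := by
        rw [show Real.exp (-2*(m:ℝ) - 6*(k:ℝ)) * (Real.pi * Real.exp (2*((k:ℝ) + m)))
          = Real.pi * (Real.exp (-2*(m:ℝ) - 6*(k:ℝ)) * Real.exp (2*((k:ℝ) + m))) by ring, ← Real.exp_add]
        congr 2
        ring

-- per-term estimate, negative-truncation case
lemma E2 (p k : ℕ) :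
    Real.exp (6*(-(p:ℝ) - k) - 2*(k:ℝ)) * (gg (-(p:ℤ) - k) * gg (k:ℤ) / gg (-(p:ℤ)))^2
      ≤ Real.pi * Real.exp (6*(-(p:ℝ) - k)) := by
  have hgp := gg_pos (-(p:ℤ))
  have hR : gg (-(p:ℤ) - k) * gg (k:ℤ) / gg (-(p:ℤ)) ≤ Real.sqrt Real.pi := by
    rw [div_le_iff₀ hgp]
    exact L2 p k
  have hRnn : 0 ≤ gg (-(p:ℤ) - k) * gg (k:ℤ) / gg (-(p:ℤ)) :=
    div_nonneg (mul_nonneg (gg_pos _).le (gg_pos _).le) (gg_pos _).le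
  have hsq : (gg (-(p:ℤ) - k) * gg (k:ℤ) / gg (-(p:ℤ)))^2 ≤ Real.pi := by
    have := mul_le_mul hR hR hRnn (Real.sqrt_nonneg _)
    rw [Real.mul_self_sqrt Real.pi_nonneg] at this
    rw [sq]
    exact this
  calc Real.exp (6*(-(p:ℝ) - k) - 2*(k:ℝ)) * (gg (-(p:ℤ) - k) * gg (k:ℤ) / gg (-(p:ℤ)))^2
      ≤ Real.exp (6*(-(p:ℝ) - k) - 2*(k:ℝ)) * Real.pi :=
        mul_le_mul_of_nonneg_left hsq (Real.exp_pos _).le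
    _ ≤ Real.pi * Real.exp (6*(-(p:ℝ) - k)) := by
        rw [mul_comm]
        apply mul_le_mul_of_nonneg_left _ Real.pi_nonneg
        apply Real.exp_le_exp.mpr
        have : (0:ℝ) ≤ (k:ℝ) := Nat.cast_nonneg k
        linarith

lemma hboundPos (n k : ℤ) (hk : 0 ≤ k) :
    (∑' j : ℤ, if j ≤ 0 ∧ 0 ≤ j + k then ew (n-1) (j+k) / (ew (n-2) j * ew (n+2) k) else 0)
      ≤ 400 := by
  obtain ⟨k', rfl⟩ : ∃ k' : ℕ, k = (k' : ℤ) := ⟨k.toNat, by omega⟩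
  have hsupp : ∀ j ∉ Finset.Icc (-(k':ℤ)) 0,
      (if j ≤ 0 ∧ 0 ≤ j + k' then ew (n-1) (j+k') / (ew (n-2) j * ew (n+2) k') else 0) = 0 := by
    intro j hj
    rw [Finset.mem_Icc] at hj
    rw [if_neg]
    omega
  rw [tsum_eq_sum hsupp]
  have hterm : ∀ j ∈ Finset.Icc (-(k':ℤ)) 0,
      (if j ≤ 0 ∧ 0 ≤ j + k' then ew (n-1) (j+k') / (ew (n-2) j * ew (n+2) k') else 0)
        ≤ ENNReal.ofReal (Real.pi * Real.exp (-4*(k':ℝ))) := by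
    intro j _
    split_ifs with hcond
    · obtain ⟨hj0, hjk⟩ := hcond
      obtain ⟨m, rfl⟩ : ∃ m : ℕ, j = -(m:ℤ) := ⟨(-j).toNat, by omega⟩
      have hmk : m ≤ k' := by omega
      rw [ew_ratio (n-2) (n+2) (n-1) (-(m:ℤ)) (k':ℤ) (-2*(m:ℝ) - 6*(k':ℝ)) (by push_cast; ring)]
      apply ENNReal.ofReal_le_ofReal
      have := E1 m k' hmk
      rw [show -(m:ℤ) + (k':ℤ) = (k':ℤ) - m by ring]
      exact this
    · exact zero_le'
  refine le_trans (Finset.sum_le_card_nsmul _ _ _ hterm) ?_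
  have hcard : (Finset.Icc (-(k':ℤ)) 0).card = k' + 1 := by
    rw [Int.card_Icc]
    omega
  rw [hcard, nsmul_eq_mul]
  have hreal : ((k':ℝ) + 1) * (Real.pi * Real.exp (-4*(k':ℝ))) ≤ 400 := by
    have h1 : (k':ℝ) + 1 ≤ Real.exp (4*(k':ℝ)) := by
      have := Real.add_one_le_exp (4*(k':ℝ))
      have : (0:ℝ) ≤ (k':ℝ) := Nat.cast_nonneg k'
      linarith [Real.add_one_le_exp (4*(k':ℝ))]
    have hE : (0:ℝ) < Real.exp (-4*(k':ℝ)) := Real.exp_pos _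
    have h2 : ((k':ℝ) + 1) * (Real.pi * Real.exp (-4*(k':ℝ)))
        ≤ Real.exp (4*(k':ℝ)) * (Real.pi * Real.exp (-4*(k':ℝ))) := by
      apply mul_le_mul_of_nonneg_right h1 (by positivity)
    have h3 : Real.exp (4*(k':ℝ)) * Real.exp (-4*(k':ℝ)) = 1 := by
      rw [← Real.exp_add]; norm_num
    have h4 : Real.exp (4*(k':ℝ)) * (Real.pi * Real.exp (-4*(k':ℝ))) = Real.pi := by
      rw [show Real.exp (4*(k':ℝ)) * (Real.pi * Real.exp (-4*(k':ℝ)))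
        = (Real.exp (4*(k':ℝ)) * Real.exp (-4*(k':ℝ))) * Real.pi by ring, h3, one_mul]
    rw [h4] at h2
    linarith [Real.pi_le_four]
  calc ((k' + 1 : ℕ) : ℝ≥0∞) * ENNReal.ofReal (Real.pi * Real.exp (-4*(k':ℝ)))
      = ENNReal.ofReal (((k':ℝ) + 1) * (Real.pi * Real.exp (-4*(k':ℝ)))) := by
        rw [← ENNReal.ofReal_natCast (k'+1), ← ENNReal.ofReal_mul (by positivity)]
        push_cast
        ring_nf
    _ ≤ ENNReal.ofReal 400 := ENNReal.ofReal_le_ofReal hreal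
    _ = 400 := by norm_num

lemma hboundNeg (n k : ℤ) (hk : 0 ≤ k) :
    (∑' j : ℤ, if j ≤ 0 ∧ j + k < 0 then ew (n+1) (j+k) / (ew (n-2) j * ew (n+2) k) else 0)
      ≤ 400 := by
  obtain ⟨k', rfl⟩ : ∃ k' : ℕ, k = (k' : ℤ) := ⟨k.toNat, by omega⟩
  set G : ℤ → ℝ≥0∞ := fun j => if j < 0 then ENNReal.ofReal (Real.pi * Real.exp (6*(j:ℝ))) else 0
    with hG
  have hle : (∑' j : ℤ, if j ≤ 0 ∧ j + k' < 0 then ew (n+1) (j+k') / (ew (n-2) j * ew (n+2) k') else 0)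
      ≤ ∑' j : ℤ, G j := by
    apply ENNReal.tsum_le_tsum
    intro j
    split_ifs with hcond
    · obtain ⟨hj0, hjk⟩ := hcond
      have hjneg : j < 0 := by omega
      obtain ⟨p, rfl⟩ : ∃ p : ℕ, j = -(p:ℤ) - k' := ⟨(-(j+k')).toNat, by omega⟩
      rw [ew_ratio (n-2) (n+2) (n+1) (-(p:ℤ) - k') (k':ℤ)
        (6*(-(p:ℝ) - (k':ℝ)) - 2*(k':ℝ)) (by push_cast; ring)]
      rw [hG]
      simp only [hjneg, if_pos]
      apply ENNReal.ofReal_le_ofReal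
      have := E2 p k'
      rw [show -(p:ℤ) - (k':ℤ) + (k':ℤ) = -(p:ℤ) by ring]
      calc Real.exp (6*(-(p:ℝ) - (k':ℝ)) - 2*(k':ℝ)) * (gg (-(p:ℤ) - k') * gg (k':ℤ) / gg (-(p:ℤ)))^2
          ≤ Real.pi * Real.exp (6*(-(p:ℝ) - k')) := this
        _ = Real.pi * Real.exp (6*((-(p:ℤ) - (k':ℤ) : ℤ) : ℝ)) := by push_cast; ring_nf
    · exact zero_le'
  refine le_trans hle ?_
  have hrepr : (∑' j : ℤ, G j) = ∑' m : ℕ, G (-(1 + (m:ℤ))) := by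
    apply tsum_eq_tsum_of_ne_zero_bij
      (fun x : Function.support (fun m : ℕ => G (-(1 + (m:ℤ)))) => -(1 + ((x : ℕ) : ℤ)))
    · intro x y hxy
      simp only [neg_inj, add_right_inj, Nat.cast_inj] at hxy
      exact Subtype.ext hxy
    · intro j hj
      have hjneg : j < 0 := by
        by_contra h
        apply hj
        rw [hG]
        simp only [if_neg (by omega : ¬ j < 0)]
      have hjm : -(1 + (((-(1+j)).toNat : ℕ) : ℤ)) = j := by omega
      refine ⟨⟨(-(1+j)).toNat, ?_⟩, hjm⟩
      show G (-(1 + (((-(1+j)).toNat : ℕ) : ℤ))) ≠ 0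
      rw [hjm]; exact hj
    · intro x; rfl
  rw [hrepr]
  have hval : ∀ m : ℕ, G (-(1 + (m:ℤ)))
      = ENNReal.ofReal Real.pi * ENNReal.ofReal (Real.exp (-6)) ^ (m+1) := by
    intro m
    rw [hG]
    simp only [if_pos (by omega : -(1 + (m:ℤ)) < 0)]
    rw [ENNReal.ofReal_mul Real.pi_nonneg, ← ENNReal.ofReal_pow (Real.exp_nonneg _),
      ← Real.exp_nat_mul]
    congr 2
    push_cast
    ring
  calc (∑' m : ℕ, G (-(1 + (m:ℤ))))
      = ENNReal.ofReal Real.pi * ∑' m : ℕ, ENNReal.ofReal (Real.exp (-6)) ^ (m+1) := by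
        rw [← ENNReal.tsum_mul_left]
        exact tsum_congr hval
    _ ≤ ENNReal.ofReal Real.pi * ∑' m : ℕ, ((2:ℝ≥0∞)⁻¹) ^ m := by
        apply mul_le_mul_right
        apply ENNReal.tsum_le_tsum
        intro m
        have hr : ENNReal.ofReal (Real.exp (-6)) ≤ (2:ℝ≥0∞)⁻¹ := by
          have h2e : (2:ℝ) ≤ Real.exp 1 := by linarith [Real.add_one_le_exp (1:ℝ)]
          have hexp : Real.exp (-6:ℝ) ≤ 1/2 := by
            have h1 : Real.exp (-6:ℝ) ≤ Real.exp (-1:ℝ) := Real.exp_le_exp.mpr (by norm_num)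
            have h2 : Real.exp (-1:ℝ) = (Real.exp 1)⁻¹ := Real.exp_neg 1
            have h3 : (Real.exp 1)⁻¹ ≤ (2:ℝ)⁻¹ :=
              inv_anti₀ (by norm_num) h2e
            rw [h2] at h1
            calc Real.exp (-6:ℝ) ≤ (Real.exp 1)⁻¹ := h1
              _ ≤ (2:ℝ)⁻¹ := h3
              _ = 1/2 := by norm_num
          calc ENNReal.ofReal (Real.exp (-6)) ≤ ENNReal.ofReal (1/2) :=
                ENNReal.ofReal_le_ofReal hexp
            _ = (2:ℝ≥0∞)⁻¹ := by
                rw [one_div, ENNReal.ofReal_inv_of_pos (by norm_num)]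
                norm_num
        calc ENNReal.ofReal (Real.exp (-6)) ^ (m+1) ≤ ((2:ℝ≥0∞)⁻¹) ^ (m+1) :=
              pow_le_pow_left' hr (m+1)
          _ ≤ ((2:ℝ≥0∞)⁻¹) ^ m := by
              rw [pow_succ]
              calc ((2:ℝ≥0∞)⁻¹) ^ m * 2⁻¹ ≤ ((2:ℝ≥0∞)⁻¹) ^ m * 1 := by
                    apply mul_le_mul_right
                    simp [ENNReal.inv_le_one]
                _ = ((2:ℝ≥0∞)⁻¹) ^ m := mul_one _
    _ ≤ 400 := by
        rw [ENNReal.tsum_geometric]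
        have h1 : (1:ℝ≥0∞) - 2⁻¹ = 2⁻¹ := ENNReal.one_sub_inv_two
        rw [h1, inv_inv]
        calc ENNReal.ofReal Real.pi * 2 ≤ ENNReal.ofReal 4 * 2 := by
              apply mul_le_mul_left
              exact ENNReal.ofReal_le_ofReal Real.pi_le_four
          _ ≤ 400 := by
              rw [show ENNReal.ofReal (4:ℝ) = (4:ℝ≥0∞) by norm_num]
              norm_num

lemma wnorm_eq (n : ℤ) (a : ℤ → ℂ) :
    wnorm n a = (∑' j : ℤ, ENNReal.ofReal ‖a j‖ ^ 2 * ew n j) ^ (1/2 : ℝ) := by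
  rw [wnorm]
  congr 1
  apply tsum_congr
  intro j
  rw [show ((j:ℂ) + 1/2) = ((j:ℂ) + 1/2) from rfl, gg_eq j, ew, ww, mul_div_assoc,
    ENNReal.ofReal_mul (sq_nonneg _), ENNReal.ofReal_pow (norm_nonneg _)]

lemma ww_sq (n j : ℤ) : ww n j = (Real.exp ((n:ℝ)*(j:ℝ)) / gg j)^2 := by
  rw [ww, div_pow, sq (Real.exp _), ← Real.exp_add]
  congr 2
  ring

-- From a bound on the weighted square, bound the norm itself.
lemma norm_bound (C : ℝ) (hC : 0 ≤ C) (M : ℤ) (x : ℂ) (j : ℤ)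
    (h : ‖x‖^2 * ww M j ≤ C) :
    ‖x‖ ≤ Real.sqrt C * Real.exp (-(M:ℝ)*(j:ℝ)) * gg j := by
  have hgp := gg_pos j
  have hu : (0:ℝ) < Real.exp ((M:ℝ)*(j:ℝ)) / gg j := div_pos (Real.exp_pos _) hgp
  have h2 : (‖x‖ * (Real.exp ((M:ℝ)*(j:ℝ)) / gg j))^2 ≤ C := by
    rw [mul_pow, ← ww_sq]
    exact h
  have h3 : ‖x‖ * (Real.exp ((M:ℝ)*(j:ℝ)) / gg j) ≤ Real.sqrt C :=
    (Real.le_sqrt (mul_nonneg (norm_nonneg _) hu.le) hC).mpr h2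
  have hinv : (Real.exp ((M:ℝ)*(j:ℝ)) / gg j) * (Real.exp (-(M:ℝ)*(j:ℝ)) * gg j) = 1 := by
    rw [div_mul_eq_mul_div, ← mul_assoc, ← Real.exp_add]
    field_simp
    simp
  calc ‖x‖ = (‖x‖ * (Real.exp ((M:ℝ)*(j:ℝ)) / gg j)) * (Real.exp (-(M:ℝ)*(j:ℝ)) * gg j) := by
        rw [mul_assoc, hinv, mul_one]
    _ ≤ Real.sqrt C * (Real.exp (-(M:ℝ)*(j:ℝ)) * gg j) :=
        mul_le_mul_of_nonneg_right h3 (by positivity)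
    _ = Real.sqrt C * Real.exp (-(M:ℝ)*(j:ℝ)) * gg j := by ring

lemma Hgg (m k : ℕ) : gg (-(m:ℤ)) * gg (k:ℤ) ≤
    Real.sqrt Real.pi * Real.exp (2*(k:ℝ)) * gg ((k:ℤ) - m) := by
  rcases le_or_gt m k with hmk | hkm
  · have h1 := L1 m k hmk
    have h2 : (2*(k:ℝ))^m ≤ (Nat.factorial m : ℝ) * Real.exp (2*(k:ℝ)) :=
      pow_le_fact_mul_exp _ (by positivity) m
    have hgkm := gg_pos ((k:ℤ) - m)
    have hfac : (0:ℝ) < (Nat.factorial m : ℝ) := by positivity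
    nlinarith [Real.sqrt_nonneg Real.pi, mul_le_mul_of_nonneg_right h2
      (mul_nonneg (Real.sqrt_nonneg Real.pi) hgkm.le)]
  · obtain ⟨p, hp⟩ : ∃ p : ℕ, m = p + k := ⟨m - k, by omega⟩
    subst hp
    have h1 := L2 p k
    have he : (1:ℝ) ≤ Real.exp (2*(k:ℝ)) := by
      rw [show (1:ℝ) = Real.exp 0 by simp]
      exact Real.exp_le_exp.mpr (by positivity)
    have hrw : -((p + k : ℕ):ℤ) = -(p:ℤ) - k := by push_cast; ring
    have hrw2 : (k:ℤ) - ((p + k : ℕ):ℤ) = -(p:ℤ) := by push_cast; ring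
    rw [hrw, hrw2]
    have hgp := gg_pos (-(p:ℤ))
    nlinarith [mul_nonneg (mul_nonneg (Real.sqrt_nonneg Real.pi) hgp.le) (sub_nonneg.mpr he)]

lemma summable_conv (n : ℤ) (a b : ℤ → ℂ)
    (ha0 : ∀ j : ℤ, 0 < j → a j = 0) (hb0 : ∀ j : ℤ, j < 0 → b j = 0)
    (ha : wnorm (n - 2) a < ⊤) (hb : wnorm (n + 2) b < ⊤) (l : ℤ) :
    Summable (fun j : ℤ => ‖a j‖ * ‖b (l - j)‖) := by
  set Ta := ∑' j : ℤ, ENNReal.ofReal ‖a j‖ ^ 2 * ew (n-2) j with hTa_def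
  set Tb := ∑' j : ℤ, ENNReal.ofReal ‖b j‖ ^ 2 * ew (n+2) j with hTb_def
  have hTa : Ta ≠ ⊤ := by
    intro h
    rw [wnorm_eq, ← hTa_def, h, ENNReal.top_rpow_of_pos (by norm_num)] at ha
    exact lt_irrefl ⊤ ha
  have hTb : Tb ≠ ⊤ := by
    intro h
    rw [wnorm_eq, ← hTb_def, h, ENNReal.top_rpow_of_pos (by norm_num)] at hb
    exact lt_irrefl ⊤ hb
  have hAr : ∀ j : ℤ, ‖a j‖^2 * ww (n-2) j ≤ Ta.toReal := by
    intro j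
    have h1 : ENNReal.ofReal (‖a j‖^2 * ww (n-2) j) ≤ Ta := by
      rw [ENNReal.ofReal_mul (sq_nonneg _), ENNReal.ofReal_pow (norm_nonneg _)]
      exact ENNReal.le_tsum j
    exact (ENNReal.ofReal_le_iff_le_toReal hTa).mp h1
  have hBr : ∀ j : ℤ, ‖b j‖^2 * ww (n+2) j ≤ Tb.toReal := by
    intro j
    have h1 : ENNReal.ofReal (‖b j‖^2 * ww (n+2) j) ≤ Tb := by
      rw [ENNReal.ofReal_mul (sq_nonneg _), ENNReal.ofReal_pow (norm_nonneg _)]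
      exact ENNReal.le_tsum j
    exact (ENNReal.ofReal_le_iff_le_toReal hTb).mp h1
  have hA : ∀ j : ℤ, ‖a j‖ ≤ Real.sqrt Ta.toReal * Real.exp (-((n-2:ℤ):ℝ)*(j:ℝ)) * gg j :=
    fun j => norm_bound _ ENNReal.toReal_nonneg _ _ j (hAr j)
  have hB : ∀ j : ℤ, ‖b j‖ ≤ Real.sqrt Tb.toReal * Real.exp (-((n+2:ℤ):ℝ)*(j:ℝ)) * gg j :=
    fun j => norm_bound _ ENNReal.toReal_nonneg _ _ j (hBr j)
  set D : ℝ := Real.sqrt Ta.toReal * Real.sqrt Tb.toReal * Real.sqrt Real.pi * gg l *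
      Real.exp (-(n:ℝ)*(l:ℝ)) with hD_def
  have hD : 0 ≤ D := by
    have := (gg_pos l).le
    positivity
  apply Summable.of_nat_of_neg
  · apply summable_of_ne_finset_zero (s := ({0} : Finset ℕ))
    intro m hm
    have hm' : (0:ℤ) < (m:ℤ) := by
      simp only [Finset.mem_singleton] at hm
      omega
    rw [ha0 _ hm']
    simp
  · refine Summable.of_nonneg_of_le (f := fun m : ℕ => D * (Real.exp (-2))^m)
      (fun m => mul_nonneg (norm_nonneg _) (norm_nonneg _)) ?_ ?_
    · intro m
      rcases lt_or_ge (l + m) 0 with hlm | hlm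
      · rw [show l - (-(m:ℤ)) = l + m by ring, hb0 _ hlm]
        simp only [norm_zero, mul_zero]
        positivity
      · obtain ⟨k, hk⟩ : ∃ k : ℕ, (k:ℤ) = l + m := ⟨(l+m).toNat, by omega⟩
        have hcalc : ‖a (-(m:ℤ))‖ * ‖b (l - (-(m:ℤ)))‖ ≤
            (Real.sqrt Ta.toReal * Real.exp (-((n-2:ℤ):ℝ)*(((-(m:ℤ)) : ℤ):ℝ)) * gg (-(m:ℤ))) *
            (Real.sqrt Tb.toReal * Real.exp (-((n+2:ℤ):ℝ)*((l+m:ℤ):ℝ)) * gg ((l+m:ℤ))) := by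
          rw [show l - (-(m:ℤ)) = l + m by ring]
          exact mul_le_mul (hA _) (hB _) (norm_nonneg _)
            (mul_nonneg (mul_nonneg (Real.sqrt_nonneg _) (Real.exp_pos _).le) (gg_pos _).le)
        refine le_trans hcalc ?_
        have hH := Hgg m k
        rw [show (k:ℤ) - m = l by omega] at hH
        have hgg' : gg (-(m:ℤ)) * gg ((l+m:ℤ)) ≤
            Real.sqrt Real.pi * Real.exp (2*(k:ℝ)) * gg l := by
          rw [show ((l+m:ℤ)) = (k:ℤ) by omega]
          exact hH
        set A := Real.sqrt Ta.toReal * Real.sqrt Tb.toReal with hA_def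
        set e1 := Real.exp (-((n-2:ℤ):ℝ)*(((-(m:ℤ)) : ℤ):ℝ)) with he1
        set e2 := Real.exp (-((n+2:ℤ):ℝ)*((l+m:ℤ):ℝ)) with he2
        have hexp : e1 * e2 * Real.exp (2*(k:ℝ))
            = Real.exp (-(n:ℝ)*(l:ℝ)) * Real.exp ((m:ℝ) * (-2)) := by
          rw [he1, he2, ← Real.exp_add, ← Real.exp_add, ← Real.exp_add]
          congr 1
          have hk' : (k:ℝ) = (l:ℝ) + (m:ℝ) := by exact_mod_cast hk
          push_cast
          rw [hk']
          ring
        calc (Real.sqrt Ta.toReal * e1 * gg (-(m:ℤ))) *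
              (Real.sqrt Tb.toReal * e2 * gg ((l+m:ℤ)))
            = (A * (e1 * e2)) * (gg (-(m:ℤ)) * gg ((l+m:ℤ))) := by rw [hA_def]; ring
          _ ≤ (A * (e1 * e2)) * (Real.sqrt Real.pi * Real.exp (2*(k:ℝ)) * gg l) := by
              apply mul_le_mul_of_nonneg_left hgg'
              rw [hA_def, he1, he2]
              positivity
          _ = (A * Real.sqrt Real.pi * gg l) * (e1 * e2 * Real.exp (2*(k:ℝ))) := by ring
          _ = (A * Real.sqrt Real.pi * gg l) *
              (Real.exp (-(n:ℝ)*(l:ℝ)) * Real.exp ((m:ℝ) * (-2))) := by rw [hexp]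
          _ = D * Real.exp ((m:ℝ) * (-2)) := by rw [hD_def, hA_def]; ring
          _ = D * (Real.exp (-2))^m := by rw [← Real.exp_nat_mul]
    · exact Summable.mul_left D (summable_geometric_of_lt_one (by positivity)
        (Real.exp_lt_one_iff.mpr (by norm_num)))

lemma sqrt_sq' (x : ℝ≥0∞) : (x ^ (1/2:ℝ)) ^ (2:ℕ) = x := by
  rw [← ENNReal.rpow_natCast (x ^ (1/2:ℝ)) 2, ← ENNReal.rpow_mul]
  norm_num

lemma rpow_half_mul (x y : ℝ≥0∞) : (x * y) ^ (1/2:ℝ) = x ^ (1/2:ℝ) * y ^ (1/2:ℝ) :=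
  ENNReal.mul_rpow_of_nonneg x y (by norm_num)

lemma cs_sq (X Y : ℤ → ℝ≥0∞) :
    (∑' j, X j * Y j) ^ (2:ℕ) ≤ (∑' j, X j ^ 2) * (∑' j, Y j ^ 2) := by
  calc (∑' j, X j * Y j) ^ (2:ℕ)
      ≤ ((∑' j, X j ^ 2) ^ (1/2:ℝ) * (∑' j, Y j ^ 2) ^ (1/2:ℝ)) ^ (2:ℕ) :=
        pow_le_pow_left₀ (zero_le') (cs_tsum X Y) 2
    _ = (∑' j, X j ^ 2) * (∑' j, Y j ^ 2) := by rw [mul_pow, sqrt_sq', sqrt_sq']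

theorem chain (n T : ℤ) (P : ℤ → Prop) [DecidablePred P] (a b c : ℤ → ℂ)
    (ha0 : ∀ j : ℤ, 0 < j → a j = 0) (hb0 : ∀ j : ℤ, j < 0 → b j = 0)
    (hsum : ∀ l : ℤ, Summable fun j : ℤ => ‖a j * b (l - j)‖)
    (hc : ∀ l : ℤ, c l = ∑' j : ℤ, a j * b (l - j))
    (hbound : ∀ k : ℤ, 0 ≤ k →
      (∑' j : ℤ, if j ≤ 0 ∧ P (j + k) then ew T (j+k) / (ew (n-2) j * ew (n+2) k) else 0) ≤ 400) :
    wnorm T (fun l => if P l then c l else 0) ≤ 20 * wnorm (n-2) a * wnorm (n+2) b := by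
  set α : ℤ → ℝ≥0∞ := fun j => ENNReal.ofReal ‖a j‖ with hα
  set β : ℤ → ℝ≥0∞ := fun j => ENNReal.ofReal ‖b j‖ with hβ
  set Φ : ℤ → ℤ → ℝ≥0∞ := fun j k =>
    if j ≤ 0 ∧ P (j + k) then ew T (j+k) / (ew (n-2) j * ew (n+2) k) else 0 with hΦ
  set A2 := ∑' j : ℤ, α j ^ 2 * ew (n-2) j with hA2
  set B2 := ∑' j : ℤ, β j ^ 2 * ew (n+2) j with hB2
  have S1 : ∀ l : ℤ, ENNReal.ofReal ‖c l‖ ≤ ∑' j : ℤ, α j * β (l - j) := by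
    intro l
    rw [hc l]
    calc ENNReal.ofReal ‖∑' j : ℤ, a j * b (l - j)‖
        ≤ ENNReal.ofReal (∑' j : ℤ, ‖a j * b (l - j)‖) :=
          ENNReal.ofReal_le_ofReal (norm_tsum_le_tsum_norm (hsum l))
      _ = ∑' j : ℤ, ENNReal.ofReal ‖a j * b (l - j)‖ :=
          ENNReal.ofReal_tsum_of_nonneg (fun j => norm_nonneg _) (hsum l)
      _ = ∑' j : ℤ, α j * β (l - j) := by
          apply tsum_congr; intro j
          rw [norm_mul, ENNReal.ofReal_mul (norm_nonneg _)]
  have S2 : ∀ l : ℤ, (if P l then (ENNReal.ofReal ‖c l‖)^2 * ew T l else 0)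
      ≤ A2 * ∑' j : ℤ, β (l-j)^2 * ew (n+2) (l-j) * Φ j (l-j) := by
    intro l
    split_ifs with hP
    · set X : ℤ → ℝ≥0∞ := fun j => α j * (ew (n-2) j) ^ (1/2:ℝ) with hX
      set Y : ℤ → ℝ≥0∞ :=
        fun j => β (l-j) * (ew (n+2) (l-j)) ^ (1/2:ℝ) * (Φ j (l-j)) ^ (1/2:ℝ) with hY
      have hid : ∀ j : ℤ, α j * β (l-j) * (ew T l) ^ (1/2:ℝ) = X j * Y j := by
        intro j
        by_cases hj : j ≤ 0
        · have hcond : j ≤ 0 ∧ P (j + (l - j)) :=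
            ⟨hj, by rw [show j + (l-j) = l by ring]; exact hP⟩
          rw [hX, hY]
          simp only [hΦ, if_pos hcond]
          rw [show j + (l-j) = l by ring]
          have hne : ew (n-2) j * ew (n+2) (l-j) ≠ 0 :=
            mul_ne_zero (ew_ne_zero _ _) (ew_ne_zero _ _)
          have hnt : ew (n-2) j * ew (n+2) (l-j) ≠ ⊤ :=
            ENNReal.mul_ne_top (ew_ne_top _ _) (ew_ne_top _ _)
          have hid2 : ew (n-2) j * ew (n+2) (l-j) *
              (ew T l / (ew (n-2) j * ew (n+2) (l-j))) = ew T l :=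
            ENNReal.mul_div_cancel hne hnt
          conv_lhs => rw [← hid2]
          rw [rpow_half_mul, rpow_half_mul]
          ring
        · have haj : a j = 0 := ha0 j (by omega)
          simp [hX, hY, hα, haj]
      have hsum_eq : (∑' j, α j * β (l-j)) * (ew T l) ^ (1/2:ℝ) = ∑' j, X j * Y j := by
        rw [← ENNReal.tsum_mul_right]
        exact tsum_congr hid
      have hX2 : (∑' j, X j ^ 2) = A2 := by
        apply tsum_congr; intro j
        rw [hX]
        rw [mul_pow, sqrt_sq']
      have hY2 : (∑' j, Y j ^ 2) = ∑' j, β (l-j)^2 * ew (n+2) (l-j) * Φ j (l-j) := by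
        apply tsum_congr; intro j
        rw [hY, mul_pow, mul_pow, sqrt_sq', sqrt_sq']
      calc (ENNReal.ofReal ‖c l‖)^2 * ew T l
          ≤ (∑' j, α j * β (l-j))^2 * ew T l :=
            mul_le_mul_left (pow_le_pow_left₀ (zero_le') (S1 l) 2) _
        _ = ((∑' j, α j * β (l-j)) * (ew T l) ^ (1/2:ℝ)) ^ (2:ℕ) := by
            rw [mul_pow, sqrt_sq']
        _ = (∑' j, X j * Y j) ^ (2:ℕ) := by rw [hsum_eq]
        _ ≤ (∑' j, X j ^ 2) * (∑' j, Y j ^ 2) := cs_sq X Y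
        _ = A2 * ∑' j : ℤ, β (l-j)^2 * ew (n+2) (l-j) * Φ j (l-j) := by rw [hX2, hY2]
    · exact zero_le'
  have main : (∑' l : ℤ, ENNReal.ofReal ‖(fun l => if P l then c l else 0) l‖ ^ 2 * ew T l)
      ≤ 400 * (A2 * B2) := by
    have htrunc : ∀ l : ℤ, ENNReal.ofReal ‖(fun l => if P l then c l else 0) l‖ ^ 2 * ew T l
        = (if P l then (ENNReal.ofReal ‖c l‖)^2 * ew T l else 0) := by
      intro l
      by_cases h : P l
      · simp only [if_pos h]
      · simp [if_neg h]
    calc (∑' l : ℤ, ENNReal.ofReal ‖(fun l => if P l then c l else 0) l‖ ^ 2 * ew T l)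
        = ∑' l : ℤ, (if P l then (ENNReal.ofReal ‖c l‖)^2 * ew T l else 0) :=
          tsum_congr htrunc
      _ ≤ ∑' l : ℤ, A2 * ∑' j : ℤ, β (l-j)^2 * ew (n+2) (l-j) * Φ j (l-j) :=
          ENNReal.tsum_le_tsum S2
      _ = A2 * ∑' l : ℤ, ∑' j : ℤ, β (l-j)^2 * ew (n+2) (l-j) * Φ j (l-j) :=
          ENNReal.tsum_mul_left
      _ = A2 * ∑' j : ℤ, ∑' l : ℤ, β (l-j)^2 * ew (n+2) (l-j) * Φ j (l-j) := by
          rw [ENNReal.tsum_comm]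
      _ = A2 * ∑' j : ℤ, ∑' k : ℤ, β k ^ 2 * ew (n+2) k * Φ j k := by
          congr 1
          apply tsum_congr; intro j
          rw [← (Equiv.addLeft j).tsum_eq (fun l => β (l-j)^2 * ew (n+2) (l-j) * Φ j (l-j))]
          apply tsum_congr; intro k
          simp only [Equiv.coe_addLeft, add_sub_cancel_left]
      _ = A2 * ∑' k : ℤ, ∑' j : ℤ, β k ^ 2 * ew (n+2) k * Φ j k := by
          rw [ENNReal.tsum_comm]
      _ = A2 * ∑' k : ℤ, (β k ^ 2 * ew (n+2) k) * ∑' j : ℤ, Φ j k := by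
          congr 1
          exact tsum_congr fun k => ENNReal.tsum_mul_left
      _ ≤ A2 * ∑' k : ℤ, (β k ^ 2 * ew (n+2) k) * 400 := by
          apply mul_le_mul_right
          apply ENNReal.tsum_le_tsum
          intro k
          rcases le_or_gt 0 k with hk | hk
          · exact mul_le_mul_right (hbound k hk) _
          · have : b k = 0 := hb0 k hk
            simp [hβ, this]
      _ = 400 * (A2 * B2) := by
          rw [ENNReal.tsum_mul_right, ← hB2]
          ring
  rw [wnorm_eq T, wnorm_eq (n-2), wnorm_eq (n+2), ← hA2, ← hB2]
  calc (∑' l : ℤ, ENNReal.ofReal ‖(fun l => if P l then c l else 0) l‖ ^ 2 * ew T l) ^ (1/2:ℝ)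
      ≤ (400 * (A2 * B2)) ^ (1/2:ℝ) := ENNReal.rpow_le_rpow main (by norm_num)
    _ = 20 * A2 ^ (1/2:ℝ) * B2 ^ (1/2:ℝ) := by
        rw [rpow_half_mul, rpow_half_mul,
          show (400:ℝ≥0∞) = 20 ^ (2:ℕ) by norm_num,
          ← ENNReal.rpow_natCast (20:ℝ≥0∞) 2, ← ENNReal.rpow_mul]
        norm_num
        ring



/-- If `a_j = 0` for `j > 0`, `b_j = 0` for `j < 0`,
`‖a‖_{n-2} < ∞` and `‖b‖_{n+2} < ∞`, then the product coefficients
`c_l := Σ_{j∈ℤ} a_j b_{l-j}` are well defined and satisfy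
`‖[c]₊‖_{n-1} ≤ 20 · ‖a‖_{n-2} · ‖b‖_{n+2}` and
`‖[c]₋‖_{n+1} ≤ 20 · ‖a‖_{n-2} · ‖b‖_{n+2}`. -/
theorem negative_positive_product_estimate (n : ℤ) (a b : ℤ → ℂ)
    (ha0 : ∀ j : ℤ, 0 < j → a j = 0) (hb0 : ∀ j : ℤ, j < 0 → b j = 0)
    (ha : wnorm (n - 2) a < ⊤) (hb : wnorm (n + 2) b < ⊤)
    (c : ℤ → ℂ) (hc : ∀ l : ℤ, c l = ∑' j : ℤ, a j * b (l - j)) :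
    (∀ l : ℤ, Summable (fun j : ℤ => ‖a j * b (l - j)‖)) ∧
    wnorm (n - 1) (posTrunc c) ≤ 20 * wnorm (n - 2) a * wnorm (n + 2) b ∧
    wnorm (n + 1) (negTrunc c) ≤ 20 * wnorm (n - 2) a * wnorm (n + 2) b := by
  have hs : ∀ l : ℤ, Summable fun j : ℤ => ‖a j * b (l - j)‖ := by
    intro l
    simp only [norm_mul]
    exact summable_conv n a b ha0 hb0 ha hb l
  refine ⟨hs, ?_, ?_⟩
  · have h := chain n (n-1) (fun l => 0 ≤ l) a b c ha0 hb0 hs hc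
      (fun k hk => hboundPos n k hk)
    exact h
  · have h := chain n (n+1) (fun l => l < 0) a b c ha0 hb0 hs hc
      (fun k hk => hboundNeg n k hk)
    exact h
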